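/- Let ν₁, ν₂, ν₃, c₁, c₂, c₃, ε₁, ε₂, ε₃ be real with εᵢ ∈ {-1,1}, ε₁ν₁² + ε₂ν₂² + ε₃ν₃² = ε₃, and Σcᵢνᵢ² = 0, and suppose the 3×3 matrix with rows (ε₁ν₁, ε₂ν₂, ε₃ν₃), (c₁ν₁, c₂ν₂, c₃ν₃), ((ε₂c₂-ε₃c₃)ν₂ν₃, (ε₃c₃-ε₁c₁)ν₃ν₁, (ε₁c₁-ε₂c₂)ν₁ν₂) is singular. Then ε₁(ε₂c₂-ε₃c₃)²ν₂²ν₃² + ε₂(ε₃c₃-ε₁c₁)²ν₃²ν₁² + ε₃(ε₁c₁-ε₂c₂)²ν₁²ν₂² = 0. -/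

import Mathlib

open Matrix

/-- Equation (54): if the displayed 3×3 matrix is singular, then
ε₁(ε₂c₂-ε₃c₃)²ν₂²ν₃² + ε₂(ε₃c₃-ε₁c₁)²ν₃²ν₁² + ε₃(ε₁c₁-ε₂c₂)²ν₁²ν₂² = 0. -/
theorem stmt14 (e1 e2 e3 c1 c2 c3 ν1 ν2 ν3 : ℝ)
    (he1 : e1 = 1 ∨ e1 = -1) (he2 : e2 = 1 ∨ e2 = -1) (he3 : e3 = 1 ∨ e3 = -1)
    (hsphere : e1 * ν1 ^ 2 + e2 * ν2 ^ 2 + e3 * ν3 ^ 2 = e3)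
    (hzeta : c1 * ν1 ^ 2 + c2 * ν2 ^ 2 + c3 * ν3 ^ 2 = 0)
    (hsing : (!![e1 * ν1, e2 * ν2, e3 * ν3;
                 c1 * ν1, c2 * ν2, c3 * ν3;
                 (e2 * c2 - e3 * c3) * ν2 * ν3, (e3 * c3 - e1 * c1) * ν3 * ν1,
                   (e1 * c1 - e2 * c2) * ν1 * ν2] : Matrix (Fin 3) (Fin 3) ℝ).det = 0) :
    e1 * (e2 * c2 - e3 * c3) ^ 2 * ν2 ^ 2 * ν3 ^ 2 +
      e2 * (e3 * c3 - e1 * c1) ^ 2 * ν3 ^ 2 * ν1 ^ 2 +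
      e3 * (e1 * c1 - e2 * c2) ^ 2 * ν1 ^ 2 * ν2 ^ 2 = 0 := by
  have hdet := hsing
  rw [show (!![e1 * ν1, e2 * ν2, e3 * ν3;
                 c1 * ν1, c2 * ν2, c3 * ν3;
                 (e2 * c2 - e3 * c3) * ν2 * ν3, (e3 * c3 - e1 * c1) * ν3 * ν1,
                   (e1 * c1 - e2 * c2) * ν1 * ν2] : Matrix (Fin 3) (Fin 3) ℝ).det
      = e1 * ν1 * (c2 * ν2 * ((e1 * c1 - e2 * c2) * ν1 * ν2))
        - e1 * ν1 * (c3 * ν3 * ((e3 * c3 - e1 * c1) * ν3 * ν1))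
        - e2 * ν2 * (c1 * ν1 * ((e1 * c1 - e2 * c2) * ν1 * ν2))
        + e2 * ν2 * (c3 * ν3 * ((e2 * c2 - e3 * c3) * ν2 * ν3))
        + e3 * ν3 * (c1 * ν1 * ((e3 * c3 - e1 * c1) * ν3 * ν1))
        - e3 * ν3 * (c2 * ν2 * ((e2 * c2 - e3 * c3) * ν2 * ν3)) from by
    rw [Matrix.det_fin_three]; simp [Matrix.vecHead, Matrix.vecTail]; ring] at hsing
  rcases he1 with rfl | rfl <;> rcases he2 with rfl | rfl <;> rcases he3 with rfl | rfl <;>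
    first
      | linear_combination hsing
      | linear_combination -hsing
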